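/- An R-module M is S-flat if and only if the localization M_S is a flat R_S-module. -/

import Mathlib

set_option maxHeartbeats 1000000
set_option synthInstance.maxHeartbeats 400000

open TensorProduct LinearMap

section aux

variable {R : Type*} [CommRing R] (S : Submonoid R)

lemma exists_fg_map_eq (J : Ideal (Localization S)) (hJ : J.FG) :
    ∃ I : Ideal R, I.FG ∧ I.map (algebraMap R (Localization S)) = J := by
  classical
  obtain ⟨T, hT⟩ := hJ
  choose p hp using fun a : Localization S => IsLocalization.surj S a
  refine ⟨Ideal.span ((fun a => (p a).1) '' T), Submodule.fg_span (T.finite_toSet.image _), ?_⟩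
  rw [Ideal.map_span, ← hT]
  apply le_antisymm
  · rw [Ideal.span_le]
    rintro _ ⟨_, ⟨a, ha, rfl⟩, rfl⟩
    rw [← hp a]
    exact Ideal.mul_mem_right _ _ (Ideal.subset_span ha)
  · rw [Ideal.span_le]
    intro a ha
    have hu : IsUnit (algebraMap R (Localization S) ((p a).2 : R)) :=
      IsLocalization.map_units _ (p a).2
    have key : a = ↑hu.unit⁻¹ * algebraMap R (Localization S) (p a).1 := by
      rw [Units.eq_inv_mul_iff_mul_eq, IsUnit.unit_spec, mul_comm]
      exact hp a
    rw [key]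
    exact Ideal.mul_mem_left _ _
      (Ideal.subset_span ⟨(fun a => (p a).1) a, Set.mem_image_of_mem _ ha, rfl⟩)

variable {M : Type*} [AddCommGroup M] [Module R M]

lemma key_iff (I : Ideal R) :
    Function.Injective (rTensor (LocalizedModule S M)
        (I.map (algebraMap R (Localization S))).subtype) ↔
      ∀ x ∈ ker (rTensor M I.subtype), ∃ s ∈ S, s • x = 0 := by
  set A := Localization S
  set N := LocalizedModule S M with hN
  set J := I.map (algebraMap R A) with hJ
  let eM : A ⊗[R] M ≃ₗ[A] N :=
    (IsLocalizedModule.isBaseChange S A (LocalizedModule.mkLinearMap S M)).equiv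
  let eI : A ⊗[R] I ≃ₗ[A] J :=
    (IsLocalizedModule.isBaseChange S A (Algebra.idealMap (S := A) I)).equiv
  let eR : A ⊗[R] R ≃ₗ[A] A := AlgebraTensorModule.rid R A A
  let E1 : A ⊗[R] (I ⊗[R] M) ≃ₗ[A] J ⊗[A] N :=
    AlgebraTensorModule.distribBaseChange R A I M ≪≫ₗ TensorProduct.congr eI eM
  let E2 : A ⊗[R] (R ⊗[R] M) ≃ₗ[A] A ⊗[A] N :=
    AlgebraTensorModule.distribBaseChange R A R M ≪≫ₗ TensorProduct.congr eR eM
  let jX : I ⊗[R] M →ₗ[R] J ⊗[A] N :=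
    (E1.restrictScalars R).toLinearMap ∘ₗ TensorProduct.mk R A (I ⊗[R] M) 1
  let jY : R ⊗[R] M →ₗ[R] A ⊗[A] N :=
    (E2.restrictScalars R).toLinearMap ∘ₗ TensorProduct.mk R A (R ⊗[R] M) 1
  haveI h1 : IsLocalizedModule S (TensorProduct.mk R A (I ⊗[R] M) 1) :=
    (isLocalizedModule_iff_isBaseChange S A _).mpr (TensorProduct.isBaseChange R (I ⊗[R] M) A)
  haveI h2 : IsLocalizedModule S (TensorProduct.mk R A (R ⊗[R] M) 1) :=
    (isLocalizedModule_iff_isBaseChange S A _).mpr (TensorProduct.isBaseChange R (R ⊗[R] M) A)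
  haveI hX : IsLocalizedModule S jX :=
    IsLocalizedModule.of_linearEquiv S (TensorProduct.mk R A (I ⊗[R] M) 1) (E1.restrictScalars R)
  haveI hY : IsLocalizedModule S jY :=
    IsLocalizedModule.of_linearEquiv S (TensorProduct.mk R A (R ⊗[R] M) 1) (E2.restrictScalars R)
  have hsq : ((rTensor N J.subtype).restrictScalars R) ∘ₗ jX = jY ∘ₗ rTensor M I.subtype := by
    apply TensorProduct.ext'
    intro i m
    simp [jX, jY, E1, E2, eI, eM, eR, AlgebraTensorModule.distribBaseChange,
      IsBaseChange.equiv_tmul, Algebra.smul_def]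
  have hmap : (IsLocalizedModule.map S jX jY (rTensor M I.subtype)) =
      (rTensor N J.subtype).restrictScalars R :=
    IsLocalizedModule.ext S jX (IsLocalizedModule.map_units jY)
      ((IsLocalizedModule.map_comp S jX jY (rTensor M I.subtype)).trans hsq.symm)
  have hinj : Function.Injective (rTensor N J.subtype) ↔
      Function.Injective (IsLocalizedModule.map S jX jY (rTensor M I.subtype)) := by
    rw [hmap]
    exact Iff.rfl
  rw [hinj]
  have hker := jX.ker_localizedMap_eq_localized₀_ker S jY (rTensor M I.subtype)
  constructor
  · intro h x hx
    have hmem : IsLocalizedModule.mk' jX x (1 : S) ∈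
        ker ((IsLocalizedModule.map S jX jY) (rTensor M I.subtype)) := by
      rw [hker]; exact ⟨x, hx, 1, rfl⟩
    have h0 : IsLocalizedModule.mk' jX x (1 : S) = 0 := h (by rw [map_zero]; exact hmem)
    obtain ⟨s, hs⟩ := (IsLocalizedModule.mk'_eq_zero' (S := S) (f := jX) (s := 1)).mp h0
    exact ⟨s, s.2, hs⟩
  · intro h
    refine (injective_iff_map_eq_zero _).mpr fun y hy => ?_
    have hmem : y ∈ ker ((IsLocalizedModule.map S jX jY) (rTensor M I.subtype)) := hy
    rw [hker] at hmem
    rcases hmem with ⟨x, hx, s, rfl⟩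
    obtain ⟨t, ht, hts⟩ := h x hx
    exact (IsLocalizedModule.mk'_eq_zero' (S := S) (f := jX) _).mpr ⟨⟨t, ht⟩, hts⟩

end aux

/-- A module `M` is `S`-flat if for every finitely generated ideal `I`,
the kernel of `I ⊗[R] M → R ⊗[R] M` is `S`-torsion. -/
def IsSFlat (R : Type*) [CommRing R] (S : Submonoid R) (M : Type*) [AddCommGroup M]
    [Module R M] : Prop :=
  ∀ I : Ideal R, I.FG →
    ∀ x ∈ LinearMap.ker (LinearMap.rTensor M (I.subtype)), ∃ s ∈ S, s • x = 0

theorem s_flat_iff_localization_flat {R : Type*} [CommRing R] (S : Submonoid R)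
    {M : Type*} [AddCommGroup M] [Module R M] :
    IsSFlat R S M ↔ Module.Flat (Localization S) (LocalizedModule S M) := by
  constructor
  · intro h
    rw [Module.Flat.iff_rTensor_injective]
    intro J hJfg
    obtain ⟨I, hIfg, rfl⟩ := exists_fg_map_eq S J hJfg
    exact (key_iff S I).mpr (h I hIfg)
  · intro hF I hIfg
    exact (key_iff S I).mp
      (Module.Flat.rTensor_preserves_injective_linearMap _ (Submodule.injective_subtype _))
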